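/- Let p be a prime, q a power of p, and n ≥ 2. Let G ∈ 𝔽_q[X_0, ..., X_{n-1}] be homogeneous of degree d > 2 with d ≡ 1 (mod p), and set F = G - X_n^d ∈ 𝔽_q[X_0, ..., X_n]. Assume F is irreducible over an algebraic closure of 𝔽_q. If F divides Σ_{i=0}^{n} (∂F/∂X_i)·X_i^q, then there exists a positive integer k such that k·d = d - 1 + q, p divides k, and G^k = Σ_{i=0}^{n-1} (∂G/∂X_i)·X_i^q as polynomials. -/
import Mathlib

open MvPolynomial

lemma fse_rename_succ {K : Type*} [CommSemiring K] {n : ℕ} (B : MvPolynomial (Fin n) K) :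
    finSuccEquiv K n (rename Fin.succ B) = Polynomial.C B := by
  induction B using MvPolynomial.induction_on with
  | C a => rw [rename_C, finSuccEquiv_apply]; simp
  | add p q hp hq => rw [map_add, map_add, hp, hq, map_add]
  | mul_X p i ih => rw [map_mul, map_mul, ih, rename_X, finSuccEquiv_X_succ, ← map_mul]

theorem stmt_6 (p : ℕ) (hp : p.Prime) (q : ℕ) (hq : ∃ k, q = p ^ k)
    (K : Type*) [Field K] [Fintype K] [CharP K p] (hK : Fintype.card K = q)
    (n : ℕ) (hn : 2 ≤ n) (d : ℕ) (hd : 2 < d) (hdp : d ≡ 1 [MOD p])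
    (G₀ : MvPolynomial (Fin n) K) (hhom : G₀.IsHomogeneous d)
    (G : MvPolynomial (Fin (n + 1)) K) (hG : G = rename Fin.castSucc G₀)
    (F : MvPolynomial (Fin (n + 1)) K) (hF : F = G - X (Fin.last n) ^ d)
    (hirr : Irreducible (MvPolynomial.map (algebraMap K (AlgebraicClosure K)) F))
    (hdvd : F ∣ ∑ i : Fin (n + 1), (pderiv i F) * X i ^ q) :
    ∃ k : ℕ, 0 < k ∧ k * d = d - 1 + q ∧ p ∣ k ∧
      G ^ k = ∑ i : Fin n, (pderiv i.castSucc G) * X i.castSucc ^ q := by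
  classical
  -- basic numerology
  have h1d : 1 ≤ d := by omega
  have hpd1 : p ∣ d - 1 := (Nat.modEq_iff_dvd' h1d).mp hdp.symm
  have hpq : p ∣ q := by
    obtain ⟨m, hm⟩ := hq
    rcases Nat.eq_zero_or_pos m with hm0 | hm0
    · exfalso
      have : (1 : ℕ) < Fintype.card K := Fintype.one_lt_card
      rw [hK, hm, hm0, pow_zero] at this
      omega
    · exact hm ▸ dvd_pow_self p hm0.ne'
  have hq2 : 2 ≤ q := le_trans hp.two_le (Nat.le_of_dvd (by
    have : (0:ℕ) < Fintype.card K := Fintype.card_pos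
    omega) hpq)
  set e := d - 1 + q with he_def
  have hde : d ≤ e := by omega
  have hdK : (d : K) = 1 := by
    have h0 : ((d - 1 : ℕ) : K) = 0 := (CharP.cast_eq_zero_iff K p _).mpr hpd1
    have h' : ((d - 1) + 1 : ℕ) = d := Nat.sub_add_cancel h1d
    calc (d : K) = (((d - 1) + 1 : ℕ) : K) := by rw [h']
      _ = ((d - 1 : ℕ) : K) + 1 := by push_cast; ring
      _ = 1 := by rw [h0, zero_add]
  have hdMv : ((d : ℕ) : MvPolynomial (Fin (n+1)) K) = 1 := by
    rw [← map_natCast (C : K →+* MvPolynomial (Fin (n+1)) K) d, hdK, map_one]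
  -- the sum
  set A₀ : MvPolynomial (Fin n) K := ∑ i : Fin n, pderiv i G₀ * X i ^ q with hA₀
  have hlastG : pderiv (Fin.last n) G = 0 := by
    apply pderiv_eq_zero_of_notMem_vars
    rw [hG]
    intro h
    obtain ⟨i, -, hi⟩ := Finset.mem_image.mp (vars_rename _ _ h)
    exact (Fin.castSucc_lt_last i).ne hi
  have hcs : ∀ i : Fin n, pderiv i.castSucc G = rename Fin.castSucc (pderiv i G₀) := by
    intro i
    rw [hG, pderiv_rename (Fin.castSucc_injective n)]
  have hsum : ∑ i : Fin (n + 1), pderiv i F * X i ^ q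
      = rename Fin.castSucc A₀ - X (Fin.last n) ^ e := by
    rw [Fin.sum_univ_castSucc]
    have hterm : ∀ i : Fin n, pderiv i.castSucc F * X i.castSucc ^ q
        = rename Fin.castSucc (pderiv i G₀ * X i ^ q) := by
      intro i
      have h0 : pderiv i.castSucc (X (Fin.last n) ^ d : MvPolynomial (Fin (n+1)) K) = 0 := by
        rw [pderiv_pow, pderiv_X_of_ne (Fin.castSucc_lt_last i).ne', mul_zero]
      rw [hF, map_sub, h0, sub_zero, hcs i, map_mul, map_pow, rename_X]
    rw [Finset.sum_congr rfl fun i _ => hterm i, ← map_sum, ← hA₀]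
    have hlast : pderiv (Fin.last n) F * X (Fin.last n) ^ q = -(X (Fin.last n) ^ e) := by
      rw [hF, map_sub, hlastG, pderiv_pow, pderiv_X_self, mul_one, hdMv, one_mul, zero_sub,
        neg_mul, ← pow_add]
    rw [hlast, sub_eq_add_neg]
  rw [hsum] at hdvd
  -- transport to Polynomial world
  set ψ : MvPolynomial (Fin (n+1)) K ≃ₐ[K] Polynomial (MvPolynomial (Fin n) K) :=
    (renameEquiv K (finRotate (n+1))).trans (finSuccEquiv K n) with hψ
  have hψrn : ∀ B : MvPolynomial (Fin n) K,
      ψ (rename Fin.castSucc B) = Polynomial.C B := by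
    intro B
    rw [hψ]
    simp only [AlgEquiv.trans_apply, renameEquiv_apply, rename_rename]
    rw [show ((finRotate (n+1) : Fin (n+1) → Fin (n+1)) ∘ Fin.castSucc) = Fin.succ from ?_,
      fse_rename_succ]
    funext i
    simp [Fin.coeSucc_eq_succ]
  have hψX : ψ (X (Fin.last n)) = Polynomial.X := by
    rw [hψ]
    simp only [AlgEquiv.trans_apply, renameEquiv_apply, rename_X, finRotate_last]
    exact finSuccEquiv_X_zero
  have hdvdP : (Polynomial.X ^ d - Polynomial.C G₀) ∣
      (Polynomial.C A₀ - Polynomial.X ^ e) := by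
    obtain ⟨c, hc⟩ := hdvd
    rw [hF, hG] at hc
    have := congrArg ψ hc
    rw [map_sub, map_pow, hψrn, hψX, map_mul, map_sub, map_pow, hψrn, hψX] at this
    rw [← neg_dvd]
    exact ⟨ψ c, by rw [this]; ring⟩
  set s := e / d with hs_def
  set r := e % d with hr_def
  have her : d * s + r = e := Nat.div_add_mod e d
  have hrd : r < d := Nat.mod_lt _ (by omega)
  have hs0 : 0 < s := Nat.div_pos hde (by omega)
  have hXe : (Polynomial.X : Polynomial (MvPolynomial (Fin n) K)) ^ e
      = (Polynomial.X ^ d) ^ s * Polynomial.X ^ r := by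
    rw [← pow_mul, ← pow_add, her]
  have hdvd2 : (Polynomial.X ^ d - Polynomial.C G₀) ∣
      (Polynomial.C A₀ - Polynomial.C (G₀ ^ s) * Polynomial.X ^ r) := by
    have h2 : (Polynomial.X ^ d - Polynomial.C G₀) ∣
        (Polynomial.X ^ e - Polynomial.C (G₀ ^ s) * Polynomial.X ^ r) := by
      have : Polynomial.X ^ e - Polynomial.C (G₀ ^ s) * Polynomial.X ^ r
          = ((Polynomial.X ^ d) ^ s - (Polynomial.C G₀) ^ s) * Polynomial.X ^ r := by
        rw [hXe, map_pow, sub_mul]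
      rw [this]
      exact Dvd.dvd.mul_right (sub_dvd_pow_sub_pow _ _ s) _
    have := dvd_add hdvdP h2
    rwa [sub_add_sub_cancel] at this
  -- G₀ ≠ 0, else F reducible
  have hG₀ : G₀ ≠ 0 := by
    intro h0
    rw [h0, map_zero] at hG
    rw [hG, zero_sub] at hF
    rw [hF, map_neg, map_pow, map_X] at hirr
    have hfac : -(X (Fin.last n) ^ d : MvPolynomial (Fin (n+1)) (AlgebraicClosure K))
        = X (Fin.last n) * -(X (Fin.last n) ^ (d - 1)) := by
      rw [mul_neg, ← pow_succ']
      congr 2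
      omega
    have notunit : ∀ m : ℕ, 0 < m →
        ¬ IsUnit (X (Fin.last n) ^ m : MvPolynomial (Fin (n+1)) (AlgebraicClosure K)) := by
      intro m hm hu
      have := hu.map (eval (fun _ => (0 : AlgebraicClosure K)))
      rw [map_pow, eval_X, zero_pow hm.ne'] at this
      exact not_isUnit_zero this
    rcases hirr.isUnit_or_isUnit hfac with h | h
    · exact notunit 1 one_pos (by rwa [pow_one])
    · exact notunit (d - 1) (by omega) (IsUnit.neg_iff _ |>.mp h)
  -- deduce the identity
  have key : Polynomial.C A₀ - Polynomial.C (G₀ ^ s) * Polynomial.X ^ r = 0 := by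
    by_contra hne
    have hle := Polynomial.natDegree_le_of_dvd hdvd2 hne
    rw [Polynomial.natDegree_X_pow_sub_C] at hle
    have h1 : (Polynomial.C A₀ - Polynomial.C (G₀ ^ s) *
        (Polynomial.X : Polynomial (MvPolynomial (Fin n) K)) ^ r).natDegree ≤ r := by
      refine le_trans (Polynomial.natDegree_sub_le _ _) ?_
      simp only [Polynomial.natDegree_C]
      refine max_le (by omega) (le_trans (Polynomial.natDegree_C_mul_le _ _) ?_)
      rw [Polynomial.natDegree_X_pow]
    omega
  have hr0 : r = 0 := by
    by_contra hr
    have := congrArg (fun P => Polynomial.coeff P r) key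
    simp [Polynomial.coeff_C, Polynomial.coeff_X_pow, hr, sub_eq_zero, ← map_pow] at this
    exact hG₀ this.1
  have hA : A₀ = G₀ ^ s := by
    have := key
    rw [hr0, pow_zero, mul_one, sub_eq_zero] at this
    exact Polynomial.C_injective this
  have hsd : s * d = e := by rw [hr0, add_zero] at her; rw [mul_comm]; exact her
  refine ⟨s, hs0, ?_, ?_, ?_⟩
  · rw [he_def] at hsd; exact hsd
  · have hpe : p ∣ e := by rw [he_def]; exact dvd_add hpd1 hpq
    have hpsd : p ∣ s * d := by rw [hsd]; exact hpe
    rcases (Nat.Prime.dvd_mul hp).mp hpsd with h | h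
    · exact h
    · exfalso
      have : p ∣ d - (d - 1) := Nat.dvd_sub h hpd1
      rw [show d - (d - 1) = 1 from by omega] at this
      exact hp.one_lt.ne' (Nat.dvd_one.mp this) |>.elim
  · calc G ^ s = rename Fin.castSucc (G₀ ^ s) := by rw [hG, map_pow]
      _ = rename Fin.castSucc A₀ := by rw [hA]
      _ = ∑ i : Fin n, (pderiv i.castSucc G) * X i.castSucc ^ q := by
          rw [hA₀, map_sum]
          refine Finset.sum_congr rfl fun i _ => ?_
          rw [map_mul, map_pow, rename_X, hcs i]
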